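/- arXiv:1312.7150 — 5 statements merged into one kernel-verified Lean document; each statement's English description precedes it below -/
import Mathlib

section
/- Let (e_i)_{i≥0} be i.i.d. real-valued random variables with common law μ, let X₀ be a real-valued random variable such that for every n ≥ 1 the variable e_n is independent of (X₀, e₀, …, e_{n−1}), fix real numbers r > 0 and s, and define X_i = r·X_{i−1} + e_i + s·e_{i−1} for i ≥ 1; set M_n = max_{1≤i≤n} X_i and fix x ∈ ℝ. Let ν₀ be the joint law of (X₀, e₀) on ℝ², and for n ≥ 1 let ν_n be the sub-probability measure on ℝ² defined by ν_n(B) = P(M_n ≤ x and (X_n, e_n) ∈ B) for Borel sets B. Define the sub-Markov kernel κ from ℝ² to ℝ² by κ(z₀, z₁)(B) = μ{ t ∈ ℝ : r·z₀ + t + s·z₁ ≤ x and (r·z₀ + t + s·z₁, t) ∈ B }. Then for every n ≥ 1, ν_n = ν_{n−1}.bind κ, i.e., ν_n(B) = ∫_{ℝ²} κ(z)(B) dν_{n−1}(z) for all Borel B ⊆ ℝ². -/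
open MeasureTheory
open scoped ProbabilityTheory

/-- Deterministic recursion for the ARMA(1,1) process as a function of the
initial value and the error sequence. -/
noncomputable def armaPhi (r s : ℝ) : ℕ → ℝ × (ℕ → ℝ) → ℝ
  | 0 => fun p => p.1
  | (j+1) => fun p => r * armaPhi r s j p + p.2 (j+1) + s * p.2 j

lemma measurable_armaPhi (r s : ℝ) : ∀ j, Measurable (armaPhi r s j) := by
  intro j
  induction j with
  | zero => exact measurable_fst
  | succ j ih =>
      have h1 : Measurable fun p : ℝ × (ℕ → ℝ) => p.2 (j+1) :=
        (measurable_pi_apply (j+1)).comp measurable_snd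
      have h2 : Measurable fun p : ℝ × (ℕ → ℝ) => p.2 j :=
        (measurable_pi_apply j).comp measurable_snd
      exact (((ih.const_mul r).add h1).add (h2.const_mul s))

/-- Theorem 2.1, measure–kernel form: for the ARMA(1,1) process
`X_i = r·X_{i−1} + e_i + s·e_{i−1}` with i.i.d. errors `e_i ~ μ`, `r > 0`, the
restricted joint laws `ν_n(B) = P(M_n ≤ x, (X_n, e_n) ∈ B)` evolve by the fixed
sub-Markov kernel `κ(z₀,z₁)(B) = μ{t : r·z₀+t+s·z₁ ≤ x ∧ (r·z₀+t+s·z₁, t) ∈ B}`: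
`ν_n = ν_{n−1}.bind κ` for every `n ≥ 1`. -/
theorem arma11_restricted_law_bind
    {Ω : Type*} [MeasureSpace Ω] [IsProbabilityMeasure (ℙ : Measure Ω)]
    (e X : ℕ → Ω → ℝ) (μ : Measure ℝ)
    (he_meas : ∀ i, Measurable (e i)) (hX0_meas : Measurable (X 0))
    (hiid : ProbabilityTheory.iIndepFun e ℙ)
    (hlaw : ∀ i, Measure.map (e i) ℙ = μ)
    (hindep : ∀ n, 1 ≤ n → ProbabilityTheory.IndepFun
        (fun ω => (X 0 ω, fun i : Fin n => e i ω)) (e n) ℙ)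
    (r s x : ℝ) (hr : 0 < r)
    (hX : ∀ i, 1 ≤ i → ∀ ω, X i ω = r * X (i - 1) ω + e i ω + s * e (i - 1) ω)
    (ν : ℕ → Measure (ℝ × ℝ))
    (hν0 : ν 0 = Measure.map (fun ω => (X 0 ω, e 0 ω)) ℙ)
    (hν : ∀ n, 1 ≤ n → ∀ B : Set (ℝ × ℝ), MeasurableSet B →
        ν n B = ℙ {ω | (∀ i, 1 ≤ i → i ≤ n → X i ω ≤ x) ∧ (X n ω, e n ω) ∈ B})
    (κ : ProbabilityTheory.Kernel (ℝ × ℝ) (ℝ × ℝ))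
    (hκ : ∀ z : ℝ × ℝ, ∀ B : Set (ℝ × ℝ), MeasurableSet B →
        κ z B = μ {t : ℝ | r * z.1 + t + s * z.2 ≤ x ∧ (r * z.1 + t + s * z.2, t) ∈ B})
    (n : ℕ) (hn : 1 ≤ n) :
    ν n = (ν (n - 1)).bind (fun z => κ z) := by
  classical
  -- measurability of the X i
  have hXmeas : ∀ i, Measurable (X i) := by
    intro i
    induction i with
    | zero => exact hX0_meas
    | succ j ih =>
        have hfe : X (j+1) = fun ω => r * X j ω + e (j+1) ω + s * e j ω := by
          funext ω
          simpa using hX (j+1) (by omega) ω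
        rw [hfe]
        exact ((ih.const_mul r).add (he_meas (j+1))).add ((he_meas j).const_mul s)
  have hμprob : IsProbabilityMeasure μ := by
    rw [← hlaw 0]
    exact Measure.isProbabilityMeasure_map (he_meas 0).aemeasurable
  -- the event A = {M_{n-1} ≤ x}
  set A : Set Ω := {ω | ∀ i, 1 ≤ i → i ≤ n - 1 → X i ω ≤ x} with hAdef
  have hA : MeasurableSet A := by
    have : A = ⋂ i, ⋂ (_ : 1 ≤ i), ⋂ (_ : i ≤ n - 1), {ω | X i ω ≤ x} := by
      ext ω; simp [hAdef, Set.mem_iInter]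
    rw [this]
    exact MeasurableSet.iInter fun i => MeasurableSet.iInter fun _ =>
      MeasurableSet.iInter fun _ => measurableSet_le (hXmeas i) measurable_const
  -- Z = (X_{n-1}, e_{n-1})
  set Z : Ω → ℝ × ℝ := fun ω => (X (n-1) ω, e (n-1) ω) with hZdef
  have hZmeas : Measurable Z := (hXmeas (n-1)).prodMk (he_meas (n-1))
  -- ν (n-1) is the law of Z restricted to A
  have hνres : ν (n-1) = Measure.map Z ((ℙ : Measure Ω).restrict A) := by
    rcases Nat.lt_or_ge 1 n with h2 | h1
    · -- n ≥ 2
      ext S hS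
      rw [Measure.map_apply hZmeas hS, Measure.restrict_apply (hZmeas hS),
        hν (n-1) (by omega) S hS]
      congr 1
      ext ω
      simp [hAdef, hZdef, Set.mem_setOf_eq, and_comm]
    · -- n = 1
      have hn1 : n = 1 := le_antisymm h1 hn
      subst hn1
      have hAuniv : A = Set.univ := by
        ext ω; simp [hAdef]; intro i h1i h0i; omega
      rw [hAuniv, Measure.restrict_univ]
      simpa [hZdef] using hν0
  -- the function of the "past" used for independence
  set ext : ℝ × (Fin n → ℝ) → ℝ × (ℕ → ℝ) :=
    fun p => (p.1, fun i => if h : i < n then p.2 ⟨i, h⟩ else 0) with hextdef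
  have hext_meas : Measurable ext := by
    refine measurable_fst.prodMk (measurable_pi_lambda _ fun i => ?_)
    by_cases h : i < n
    · simp only [h, dif_pos]
      exact (measurable_pi_apply _).comp measurable_snd
    · simp only [h, dif_neg, not_false_iff]
      exact measurable_const
  set S : Set (ℝ × (ℕ → ℝ)) :=
    {p | ∀ i, 1 ≤ i → i ≤ n - 1 → armaPhi r s i p ≤ x} with hSdef
  have hSmeas : MeasurableSet S := by
    have : S = ⋂ i, ⋂ (_ : 1 ≤ i), ⋂ (_ : i ≤ n - 1), {p | armaPhi r s i p ≤ x} := by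
      ext p; simp [hSdef, Set.mem_iInter]
    rw [this]
    exact MeasurableSet.iInter fun i => MeasurableSet.iInter fun _ =>
      MeasurableSet.iInter fun _ =>
        measurableSet_le (measurable_armaPhi r s i) measurable_const
  set ψ : ℝ × (ℕ → ℝ) → ℝ × ℝ × ℝ :=
    fun p => (S.indicator (fun _ => (1:ℝ)) p, armaPhi r s (n-1) p, p.2 (n-1)) with hψdef
  have hψmeas : Measurable ψ := by
    refine (Measurable.indicator measurable_const hSmeas).prodMk ?_
    exact (measurable_armaPhi r s (n-1)).prodMk
      ((measurable_pi_apply (n-1)).comp measurable_snd)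
  set g : Ω → ℝ × ℝ × ℝ :=
    fun ω => (A.indicator (fun _ => (1:ℝ)) ω, X (n-1) ω, e (n-1) ω) with hgdef
  have hgmeas : Measurable g :=
    (Measurable.indicator measurable_const hA).prodMk hZmeas
  -- key recursion identity
  have key : ∀ j, j < n → ∀ ω : Ω,
      armaPhi r s j (X 0 ω, fun i => if h : i < n then e i ω else 0) = X j ω := by
    intro j
    induction j with
    | zero => intro _ _; rfl
    | succ j ih =>
        intro hj ω
        have hj' : j < n := by omega
        have h1 : j + 1 < n := hj
        simp only [armaPhi, ih hj' ω, dif_pos h1, dif_pos hj']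
        rw [hX (j+1) (by omega) ω]
        simp
  -- g equals ψ ∘ ext ∘ F
  have hgeq : g = fun ω => ψ (ext (X 0 ω, fun i : Fin n => e i ω)) := by
    funext ω
    have hmem : (X 0 ω, fun i => if h : i < n then e i ω else 0) ∈ S ↔ ω ∈ A := by
      constructor
      · intro hp i h1 h2
        have := hp i h1 h2
        rwa [key i (by omega) ω] at this
      · intro hω i h1 h2
        rw [key i (by omega) ω]
        exact hω i h1 h2
    have hext_eval : ext (X 0 ω, fun i : Fin n => e i ω)
        = (X 0 ω, fun i => if h : i < n then e i ω else 0) := rfl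
    show (A.indicator (fun _ => (1:ℝ)) ω, X (n-1) ω, e (n-1) ω)
        = ψ (ext (X 0 ω, fun i : Fin n => e i ω))
    rw [hext_eval]
    refine Prod.ext ?_ (Prod.ext ?_ ?_)
    · show A.indicator (fun _ => (1:ℝ)) ω
          = S.indicator (fun _ => (1:ℝ)) (X 0 ω, fun i => if h : i < n then e i ω else 0)
      by_cases hω : ω ∈ A
      · rw [Set.indicator_of_mem hω, Set.indicator_of_mem (hmem.mpr hω)]
      · have hns : (X 0 ω, fun i => if h : i < n then e i ω else 0) ∉ S :=
          fun hc => hω (hmem.mp hc)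
        rw [Set.indicator_of_notMem hω, Set.indicator_of_notMem hns]
    · exact (key (n-1) (by omega) ω).symm
    · show e (n-1) ω = if h : n - 1 < n then e (n-1) ω else 0
      rw [dif_pos (show n - 1 < n by omega)]
  -- independence of g and e n
  have hgind : ProbabilityTheory.IndepFun g (e n) ℙ := by
    rw [hgeq]
    exact (hindep n hn).comp (hψmeas.comp hext_meas) measurable_id
  -- the product-law identity
  have hmapprod : Measure.map (fun ω => (g ω, e n ω)) ℙ
      = (Measure.map g ℙ).prod μ := by
    rw [← hlaw n]
    exact (ProbabilityTheory.indepFun_iff_map_prod_eq_prod_map_map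
      hgmeas.aemeasurable (he_meas n).aemeasurable).mp hgind
  -- now compute ν n B for each measurable B
  ext B hB
  -- the set D in the product space
  set D : Set ((ℝ × ℝ × ℝ) × ℝ) :=
    {q | q.1.1 = 1 ∧ r * q.1.2.1 + q.2 + s * q.1.2.2 ≤ x ∧
      (r * q.1.2.1 + q.2 + s * q.1.2.2, q.2) ∈ B} with hDdef
  have hu : Measurable fun q : (ℝ × ℝ × ℝ) × ℝ =>
      r * q.1.2.1 + q.2 + s * q.1.2.2 := by
    have h1 : Measurable fun q : (ℝ × ℝ × ℝ) × ℝ => q.1.2.1 :=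
      measurable_fst.comp (measurable_snd.comp measurable_fst)
    have h2 : Measurable fun q : (ℝ × ℝ × ℝ) × ℝ => q.1.2.2 :=
      measurable_snd.comp (measurable_snd.comp measurable_fst)
    exact ((h1.const_mul r).add measurable_snd).add (h2.const_mul s)
  have hD : MeasurableSet D := by
    refine MeasurableSet.inter ?_ (MeasurableSet.inter ?_ ?_)
    · exact (measurable_fst.comp measurable_fst) (measurableSet_singleton (1:ℝ))
    · exact measurableSet_le hu measurable_const
    · exact (hu.prodMk measurable_snd) hB
  -- preimage identity
  have hpre : (fun ω => (g ω, e n ω)) ⁻¹' D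
      = {ω | (∀ i, 1 ≤ i → i ≤ n → X i ω ≤ x) ∧ (X n ω, e n ω) ∈ B} := by
    ext ω
    have hXn : X n ω = r * X (n-1) ω + e n ω + s * e (n-1) ω := hX n hn ω
    simp only [Set.mem_preimage, hDdef, Set.mem_setOf_eq, hgdef]
    constructor
    · rintro ⟨h1, h2, h3⟩
      have hωA : ω ∈ A := by
        by_contra hc
        rw [Set.indicator_of_notMem hc] at h1
        exact one_ne_zero h1.symm
      refine ⟨fun i hi1 hi2 => ?_, ?_⟩
      · rcases Nat.lt_or_ge i n with hlt | hge
        · exact hωA i hi1 (by omega)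
        · have : i = n := by omega
          subst this
          rwa [hXn]
      · rwa [hXn]
    · rintro ⟨h1, h2⟩
      have hωA : ω ∈ A := fun i hi1 hi2 => h1 i hi1 (by omega)
      refine ⟨by rw [Set.indicator_of_mem hωA], ?_, ?_⟩
      · rw [← hXn]; exact h1 n hn (le_refl n)
      · rwa [← hXn]
  -- section of D at g ω
  have hsec : ∀ ω : Ω, μ (Prod.mk (g ω) ⁻¹' D)
      = A.indicator (fun ω => κ (Z ω) B) ω := by
    intro ω
    by_cases hω : ω ∈ A
    · have hsecset : Prod.mk (g ω) ⁻¹' D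
          = {t : ℝ | r * (Z ω).1 + t + s * (Z ω).2 ≤ x ∧
              (r * (Z ω).1 + t + s * (Z ω).2, t) ∈ B} := by
        ext t
        simp [hDdef, hgdef, hZdef, Set.indicator_of_mem hω]
      rw [hsecset, Set.indicator_of_mem hω, hκ (Z ω) B hB]
    · have hsecset : Prod.mk (g ω) ⁻¹' D = (∅ : Set ℝ) := by
        ext t
        simp [hDdef, hgdef, Set.indicator_of_notMem hω]
      rw [hsecset, Set.indicator_of_notMem hω, measure_empty]
  -- put everything together
  have hcalc : ν n B = ∫⁻ ω, A.indicator (fun ω => κ (Z ω) B) ω ∂ℙ := by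
    rw [hν n hn B hB, ← hpre,
      ← Measure.map_apply (hgmeas.prodMk (he_meas n)) hD, hmapprod,
      Measure.prod_apply hD,
      lintegral_map (measurable_measure_prodMk_left hD) hgmeas]
    exact lintegral_congr hsec
  rw [hcalc, lintegral_indicator hA,
    Measure.bind_apply hB (ProbabilityTheory.Kernel.measurable κ).aemeasurable,
    hνres, lintegral_map (ProbabilityTheory.Kernel.measurable_coe κ hB) hZmeas]
end

section
/- Let (e_i)_{i≥0} be i.i.d. real-valued random variables with common law μ, let X₀ be a real-valued random variable such that for every n ≥ 1 the variable e_n is independent of (X₀, e₀, …, e_{n−1}), fix real numbers r > 0 and s, and define X_i = r·X_{i−1} + e_i + s·e_{i−1} for i ≥ 1; set M_n = max_{1≤i≤n} X_i and fix x ∈ ℝ. Let ν₀ be the joint law of (X₀, e₀) on ℝ², and define the sub-Markov kernel κ from ℝ² to ℝ² by κ(z₀, z₁)(B) = μ{ t ∈ ℝ : r·z₀ + t + s·z₁ ≤ x and (r·z₀ + t + s·z₁, t) ∈ B }. Then for every n ≥ 1, P(M_n ≤ x) equals the total mass of the measure obtained by binding ν₀ with κ iterated n times: P(M_n ≤ x)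 = (ν₀.bind κ.bind κ … (n times))(ℝ²). -/
open MeasureTheory
open scoped ProbabilityTheory

/-- Auxiliary: the ARMA(1,1) recursion as a measurable function of
`(X₀, (e₀, …, e_m))`. -/
def armaF (r s : ℝ) (m : ℕ) : ℕ → ℝ × (Fin (m + 1) → ℝ) → ℝ
  | 0 => fun p => p.1
  | (i + 1) => fun p =>
      r * armaF r s m i p + p.2 ⟨min (i + 1) m, by omega⟩ + s * p.2 ⟨min i m, by omega⟩

lemma armaF_measurable (r s : ℝ) (m i : ℕ) : Measurable (armaF r s m i) := by
  induction i with
  | zero => exact measurable_fst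
  | succ i ih =>
    exact ((measurable_const.mul ih).add
      ((measurable_pi_apply _).comp measurable_snd)).add
      (measurable_const.mul ((measurable_pi_apply _).comp measurable_snd))

lemma arma_event_measurable {Ω : Type*} [MeasurableSpace Ω] (X : ℕ → Ω → ℝ)
    (hXm : ∀ i, Measurable (X i)) (x : ℝ) (m : ℕ) :
    MeasurableSet {ω | ∀ i, 1 ≤ i → i ≤ m → X i ω ≤ x} := by
  have : {ω | ∀ i, 1 ≤ i → i ≤ m → X i ω ≤ x}
      = ⋂ i, ⋂ (_ : 1 ≤ i), ⋂ (_ : i ≤ m), {ω | X i ω ≤ x} := by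
    ext ω; simp
  rw [this]
  exact MeasurableSet.iInter fun i => MeasurableSet.iInter fun _ =>
    MeasurableSet.iInter fun _ => measurableSet_le (hXm i) measurable_const

/-- The key one-step identity, proved via independence and Fubini. -/
lemma arma_step {Ω : Type*} [MeasureSpace Ω] [IsProbabilityMeasure (ℙ : Measure Ω)]
    (e X : ℕ → Ω → ℝ) (μ : Measure ℝ) [IsProbabilityMeasure μ]
    (he_meas : ∀ i, Measurable (e i)) (hXm : ∀ i, Measurable (X i))
    (r s x : ℝ)
    (hX : ∀ i, 1 ≤ i → ∀ ω, X i ω = r * X (i - 1) ω + e i ω + s * e (i - 1) ω)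
    (κ : ProbabilityTheory.Kernel (ℝ × ℝ) (ℝ × ℝ))
    (hκ : ∀ z : ℝ × ℝ, ∀ B : Set (ℝ × ℝ), MeasurableSet B →
        κ z B = μ {t : ℝ | r * z.1 + t + s * z.2 ≤ x ∧ (r * z.1 + t + s * z.2, t) ∈ B})
    (m : ℕ)
    (hind : ProbabilityTheory.IndepFun
        (fun ω => (X 0 ω, fun i : Fin (m + 1) => e i ω)) (e (m + 1)) ℙ)
    (hlawm : Measure.map (e (m + 1)) ℙ = μ)
    (B : Set (ℝ × ℝ)) (hB : MeasurableSet B) :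
    ℙ ((fun ω => (X (m + 1) ω, e (m + 1) ω)) ⁻¹' B
        ∩ {ω | ∀ i, 1 ≤ i → i ≤ m + 1 → X i ω ≤ x})
      = ∫⁻ ω in {ω | ∀ i, 1 ≤ i → i ≤ m → X i ω ≤ x}, κ (X m ω, e m ω) B ∂ℙ := by
  classical
  set Y : Ω → ℝ × (Fin (m + 1) → ℝ) := fun ω => (X 0 ω, fun i : Fin (m + 1) => e i ω)
    with hYdef
  have hY : Measurable Y :=
    (hXm 0).prodMk (measurable_pi_lambda _ fun i => he_meas i)
  -- X i as a function of Y, for i ≤ m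
  have hXF : ∀ i, i ≤ m → ∀ ω, X i ω = armaF r s m i (Y ω) := by
    intro i
    induction i with
    | zero => intro _ ω; rfl
    | succ i ih =>
      intro hi ω
      have h1 : X (i + 1) ω = r * X i ω + e (i + 1) ω + s * e i ω := by
        have := hX (i + 1) (by omega) ω
        simpa using this
      have h2 : armaF r s m (i + 1) (Y ω)
          = r * armaF r s m i (Y ω) + e (min (i + 1) m) ω + s * e (min i m) ω := rfl
      rw [h1, h2, ← ih (by omega) ω, Nat.min_eq_left hi, Nat.min_eq_left (by omega)]
  -- the event and the pair as functions of Y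
  set A : Set (ℝ × (Fin (m + 1) → ℝ)) :=
    {p | ∀ i, 1 ≤ i → i ≤ m → armaF r s m i p ≤ x} with hAdef
  have hA : MeasurableSet A := by
    have : A = ⋂ i, ⋂ (_ : 1 ≤ i), ⋂ (_ : i ≤ m), {p | armaF r s m i p ≤ x} := by
      ext p; simp [hAdef]
    rw [this]
    exact MeasurableSet.iInter fun i => MeasurableSet.iInter fun _ =>
      MeasurableSet.iInter fun _ =>
        measurableSet_le (armaF_measurable r s m i) measurable_const
  have hYA : ∀ ω, Y ω ∈ A ↔ ω ∈ {ω | ∀ i, 1 ≤ i → i ≤ m → X i ω ≤ x} := by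
    intro ω
    constructor
    · intro h i h1 h2; rw [hXF i h2 ω]; exact h i h1 h2
    · intro h i h1 h2; rw [← hXF i h2 ω]; exact h i h1 h2
  set f : ℝ × (Fin (m + 1) → ℝ) → ℝ × ℝ :=
    fun p => (armaF r s m m p, p.2 ⟨m, by omega⟩) with hfdef
  have hf : Measurable f :=
    (armaF_measurable r s m m).prodMk ((measurable_pi_apply _).comp measurable_snd)
  have hfY : ∀ ω, f (Y ω) = (X m ω, e m ω) := by
    intro ω
    simp only [hfdef, hYdef]
    exact Prod.ext (hXF m le_rfl ω).symm rfl
  -- the product-space set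
  set C : Set ((ℝ × (Fin (m + 1) → ℝ)) × ℝ) :=
    {q | q.1 ∈ A ∧ r * (f q.1).1 + q.2 + s * (f q.1).2 ≤ x ∧
      (r * (f q.1).1 + q.2 + s * (f q.1).2, q.2) ∈ B} with hCdef
  have hg : Measurable fun q : (ℝ × (Fin (m + 1) → ℝ)) × ℝ =>
      r * (f q.1).1 + q.2 + s * (f q.1).2 :=
    Measurable.add
      (Measurable.add (measurable_const.mul (measurable_fst.comp (hf.comp measurable_fst)))
        measurable_snd)
      (measurable_const.mul (measurable_snd.comp (hf.comp measurable_fst)))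
  have hC : MeasurableSet C := by
    refine (measurable_fst hA).inter (MeasurableSet.inter ?_ ?_)
    · exact measurableSet_le hg measurable_const
    · exact (hg.prodMk measurable_snd) hB
  -- the set identity
  have hset : (fun ω => (X (m + 1) ω, e (m + 1) ω)) ⁻¹' B
        ∩ {ω | ∀ i, 1 ≤ i → i ≤ m + 1 → X i ω ≤ x}
      = (fun ω => (Y ω, e (m + 1) ω)) ⁻¹' C := by
    ext ω
    have h1 : X (m + 1) ω = r * armaF r s m m (Y ω) + e (m + 1) ω + s * e m ω := by
      have h := hX (m + 1) (by omega) ω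
      simp only [Nat.add_sub_cancel] at h
      rw [hXF m le_rfl ω] at h
      exact h
    simp only [Set.mem_inter_iff, Set.mem_preimage, Set.mem_setOf_eq, hCdef,
      hfY ω, hYA ω]
    constructor
    · rintro ⟨hBmem, hall⟩
      refine ⟨fun i hi1 hi2 => hall i hi1 (by omega), ?_, ?_⟩
      · rw [hXF m le_rfl ω, ← h1]; exact hall (m + 1) (by omega) le_rfl
      · rw [hXF m le_rfl ω, ← h1]; exact hBmem
    · rintro ⟨hall, hle, hBmem⟩
      refine ⟨by rw [h1, ← hXF m le_rfl ω]; exact hBmem, fun i hi1 hi2 => ?_⟩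
      rcases Nat.lt_or_ge i (m + 1) with h | h
      · exact hall i hi1 (by omega)
      · have : i = m + 1 := by omega
        subst this; rw [h1, ← hXF m le_rfl ω]; exact hle
  -- independence gives the product law
  have hprod : Measure.map (fun ω => (Y ω, e (m + 1) ω)) ℙ = (Measure.map Y ℙ).prod μ := by
    rw [← hlawm]
    exact (ProbabilityTheory.indepFun_iff_map_prod_eq_prod_map_map
      hY.aemeasurable (he_meas (m + 1)).aemeasurable).mp hind
  -- sections of C
  have hsec : ∀ y, μ (Prod.mk y ⁻¹' C) = A.indicator (fun y => κ (f y) B) y := by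
    intro y
    by_cases hy : y ∈ A
    · rw [Set.indicator_of_mem hy, hκ (f y) B hB]
      congr 1
      ext t
      simp [hCdef, hy]
    · rw [Set.indicator_of_notMem hy]
      have : Prod.mk y ⁻¹' C = ∅ := by
        ext t; simp [hCdef, hy]
      rw [this, measure_empty]
  -- assemble
  calc ℙ ((fun ω => (X (m + 1) ω, e (m + 1) ω)) ⁻¹' B
        ∩ {ω | ∀ i, 1 ≤ i → i ≤ m + 1 → X i ω ≤ x})
      = ℙ ((fun ω => (Y ω, e (m + 1) ω)) ⁻¹' C) := by rw [hset]
    _ = Measure.map (fun ω => (Y ω, e (m + 1) ω)) ℙ C := by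
        rw [Measure.map_apply (hY.prodMk (he_meas (m + 1))) hC]
    _ = (Measure.map Y ℙ).prod μ C := by rw [hprod]
    _ = ∫⁻ y, μ (Prod.mk y ⁻¹' C) ∂(Measure.map Y ℙ) := Measure.prod_apply hC
    _ = ∫⁻ y, A.indicator (fun y => κ (f y) B) y ∂(Measure.map Y ℙ) := by
        simp only [hsec]
    _ = ∫⁻ y in A, κ (f y) B ∂(Measure.map Y ℙ) := lintegral_indicator hA _
    _ = ∫⁻ y, κ (f y) B ∂(Measure.map Y (Measure.restrict ℙ (Y ⁻¹' A))) := by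
        rw [Measure.restrict_map hY hA]
    _ = ∫⁻ ω, κ (f (Y ω)) B ∂(Measure.restrict ℙ (Y ⁻¹' A)) :=
        lintegral_map ((κ.measurable_coe hB).comp hf) hY
    _ = ∫⁻ ω in {ω | ∀ i, 1 ≤ i → i ≤ m → X i ω ≤ x}, κ (X m ω, e m ω) B ∂ℙ := by
        have hAE : Y ⁻¹' A = {ω | ∀ i, 1 ≤ i → i ≤ m → X i ω ≤ x} := by
          ext ω; exact hYA ω
        rw [hAE]
        refine lintegral_congr fun ω => ?_
        rw [hfY ω]

/-- Theorem 2.2: for the ARMA(1,1) process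
`X_i = r·X_{i−1} + e_i + s·e_{i−1}` with i.i.d. errors `e_i ~ μ`, `r > 0`,
and `M_n = max_{1≤i≤n} X_i`, the cdf of the maximum at `x` equals the total
mass of the `n`-fold iterate of the sub-Markov kernel
`κ(z₀,z₁)(B) = μ{t : r·z₀+t+s·z₁ ≤ x ∧ (r·z₀+t+s·z₁, t) ∈ B}` applied (by
`Measure.bind`) to the initial law `ν₀` of `(X₀, e₀)`. -/
theorem arma11_max_cdf_iterated_kernel
    {Ω : Type*} [MeasureSpace Ω] [IsProbabilityMeasure (ℙ : Measure Ω)]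
    (e X : ℕ → Ω → ℝ) (μ : Measure ℝ)
    (he_meas : ∀ i, Measurable (e i)) (hX0_meas : Measurable (X 0))
    (hiid : ProbabilityTheory.iIndepFun e ℙ)
    (hlaw : ∀ i, Measure.map (e i) ℙ = μ)
    (hindep : ∀ n, 1 ≤ n → ProbabilityTheory.IndepFun
        (fun ω => (X 0 ω, fun i : Fin n => e i ω)) (e n) ℙ)
    (r s x : ℝ) (hr : 0 < r)
    (hX : ∀ i, 1 ≤ i → ∀ ω, X i ω = r * X (i - 1) ω + e i ω + s * e (i - 1) ω)
    (κ : ProbabilityTheory.Kernel (ℝ × ℝ) (ℝ × ℝ))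
    (hκ : ∀ z : ℝ × ℝ, ∀ B : Set (ℝ × ℝ), MeasurableSet B →
        κ z B = μ {t : ℝ | r * z.1 + t + s * z.2 ≤ x ∧ (r * z.1 + t + s * z.2, t) ∈ B})
    (n : ℕ) (hn : 1 ≤ n) :
    ℙ {ω | ∀ i, 1 ≤ i → i ≤ n → X i ω ≤ x}
      = (fun m : Measure (ℝ × ℝ) => m.bind (fun z => κ z))^[n]
          (Measure.map (fun ω => (X 0 ω, e 0 ω)) ℙ) Set.univ := by
  have hμ : IsProbabilityMeasure μ :=
    hlaw 0 ▸ Measure.isProbabilityMeasure_map (he_meas 0).aemeasurable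
  -- measurability of all X i
  have hXm : ∀ i, Measurable (X i) := by
    intro i
    induction i with
    | zero => exact hX0_meas
    | succ i ih =>
      have : X (i + 1) = fun ω => r * X i ω + e (i + 1) ω + s * e i ω := by
        funext ω
        have := hX (i + 1) (by omega) ω
        simpa using this
      rw [this]
      exact ((measurable_const.mul ih).add (he_meas (i + 1))).add
        (measurable_const.mul (he_meas i))
  have hpair : ∀ m : ℕ, Measurable fun ω => (X m ω, e m ω) :=
    fun m => (hXm m).prodMk (he_meas m)
  -- the main induction: identify the iterated measure
  have key : ∀ m : ℕ,
      (fun mm : Measure (ℝ × ℝ) => mm.bind (fun z => κ z))^[m]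
          (Measure.map (fun ω => (X 0 ω, e 0 ω)) ℙ)
        = Measure.map (fun ω => (X m ω, e m ω))
            (Measure.restrict ℙ {ω | ∀ i, 1 ≤ i → i ≤ m → X i ω ≤ x}) := by
    intro m
    induction m with
    | zero =>
      have : {ω : Ω | ∀ i, 1 ≤ i → i ≤ 0 → X i ω ≤ x} = Set.univ := by
        ext ω; simp; intro i h1 h2; omega
      rw [Function.iterate_zero_apply, this, Measure.restrict_univ]
    | succ m ih =>
      rw [Function.iterate_succ_apply', ih]
      refine Measure.ext fun B hB => ?_
      rw [Measure.bind_apply hB κ.measurable.aemeasurable,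
        lintegral_map (κ.measurable_coe hB) (hpair m),
        Measure.map_apply (hpair (m + 1)) hB,
        Measure.restrict_apply ((hpair (m + 1)) hB)]
      exact (arma_step e X μ he_meas hXm r s x hX κ hκ m
        (hindep (m + 1) (by omega)) (hlaw (m + 1)) B hB).symm
  rw [key n, Measure.map_apply (hpair n) MeasurableSet.univ,
    Set.preimage_univ, Measure.restrict_apply MeasurableSet.univ, Set.univ_inter]
end

section
/- Fix real numbers r > 0, s > 0, x, y₀, y₁, and write y_{0x} = min(y₀, x) and γ(z₀) = (y_{0x} − y₁ − r·z₀)/s. Let f : ℝ → ℝ be continuously differentiable and let h : ℝ² → ℝ have a continuous partial derivative ∂₂h in its second variable, with h(z₀, z₁) → 0 as z₁ → +∞ for every z₀ ∈ ℝ. Assume that for every z₀ the functions z₁ ↦ f(y_{0x} − r·z₀ − s·z₁)·∂₂h(z₀, z₁) and z₁ ↦ f′(y_{0x} − r·z₀ − s·z₁)·h(z₀, z₁) are integrable on (γ(z₀), ∞), and that the three functions of z₀ given by the corresponding inner integrals and by z₀ ↦ h(z₀, γ(z₀)) are integrable on ℝ. Then: r·∫_ℝ ∫_{γ(z₀)}^{∞}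 f(y_{0x} − r·z₀ − s·z₁)·∂₂h(z₀, z₁) dz₁ dz₀ = −r·f(y₁)·∫_ℝ h(z₀, γ(z₀)) dz₀ + r·s·∫_ℝ ∫_{γ(z₀)}^{∞} f′(y_{0x} − r·z₀ − s·z₁)·h(z₀, z₁) dz₁ dz₀. -/
open MeasureTheory Filter

lemma ibp_aux (s : ℝ) (hs : 0 < s) (f : ℝ → ℝ) (hf : ContDiff ℝ 1 f)
    (h h₂ : ℝ → ℝ) (hh₂ : ∀ z : ℝ, HasDerivAt h (h₂ z) z)
    (hlim : Tendsto h atTop (nhds 0))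
    (c γ : ℝ)
    (hint1 : IntegrableOn (fun z => f (c - s * z) * h₂ z) (Set.Ioi γ))
    (hint2 : IntegrableOn (fun z => deriv f (c - s * z) * h z) (Set.Ioi γ)) :
    ∫ z in Set.Ioi γ, f (c - s * z) * h₂ z
      = -(f (c - s * γ) * h γ) + s * ∫ z in Set.Ioi γ, deriv f (c - s * z) * h z := by
  have hfd : ∀ u : ℝ, HasDerivAt f (deriv f u) u :=
    fun u => ((hf.differentiable one_ne_zero) u).hasDerivAt
  have hFd : ∀ z : ℝ, HasDerivAt (fun t => f (c - s * t)) (deriv f (c - s * z) * (-s)) z := by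
    intro z
    have hinner : HasDerivAt (fun t : ℝ => c - s * t) (-s) z := by
      simpa using ((hasDerivAt_id z).const_mul s).const_sub c
    exact (hfd (c - s * z)).comp z hinner
  set g : ℝ → ℝ := fun z => f (c - s * z) * h z with hgdef
  set g' : ℝ → ℝ := fun z => f (c - s * z) * h₂ z - s * (deriv f (c - s * z) * h z) with hg'def
  have hg : ∀ z : ℝ, HasDerivAt g (g' z) z := by
    intro z
    have : HasDerivAt (fun t => f (c - s * t) * h t)
        (deriv f (c - s * z) * -s * h z + f (c - s * z) * h₂ z) z := (hFd z).mul (hh₂ z)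
    convert this using 1
    show f (c - s * z) * h₂ z - s * (deriv f (c - s * z) * h z) = _
    ring
  have hg'int : IntegrableOn g' (Set.Ioi γ) := hint1.sub (hint2.const_mul s)
  have hFTC : ∀ z : ℝ, γ ≤ z → (∫ t in γ..z, g' t) = g z - g γ := by
    intro z hz
    refine intervalIntegral.integral_eq_sub_of_hasDerivAt (fun t _ => hg t) ?_
    rw [intervalIntegrable_iff_integrableOn_Ioc_of_le hz]
    exact hg'int.mono_set Set.Ioc_subset_Ioi_self
  set I := ∫ z in Set.Ioi γ, g' z with hI
  have htend0 : Tendsto (fun z => ∫ t in γ..z, g' t) atTop (nhds I) :=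
    intervalIntegral_tendsto_integral_Ioi γ hg'int tendsto_id
  have htend : Tendsto g atTop (nhds (g γ + I)) := by
    refine (htend0.const_add (g γ)).congr' ?_
    filter_upwards [eventually_ge_atTop γ] with z hz
    rw [hFTC z hz]; ring
  have hgz : g γ + I = 0 := by
    by_contra hne
    set ℓ := g γ + I with hℓ
    have hpos : 0 < |ℓ| / 2 := by
      have := abs_pos.mpr hne
      linarith
    have h1 : ∀ᶠ z in atTop, |ℓ| / 2 < |g z| := by
      have h2 := htend (Metric.ball_mem_nhds ℓ hpos)
      filter_upwards [h2] with z hz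
      have hd : |g z - ℓ| < |ℓ| / 2 := by
        simpa [Real.dist_eq] using hz
      have h3 : |ℓ| - |g z| ≤ |ℓ - g z| := abs_sub_abs_le_abs_sub ℓ (g z)
      rw [abs_sub_comm] at h3
      linarith
    obtain ⟨b, hb⟩ := eventually_atTop.1 (h1.and (eventually_ge_atTop γ))
    have hγb : γ ≤ b := (hb b le_rfl).2
    have hFne : ∀ z : ℝ, b ≤ z → f (c - s * z) ≠ 0 := by
      intro z hz hF0
      have h4 := (hb z hz).1
      have : g z = 0 := by simp [hgdef, hF0]
      rw [this] at h4
      simp at h4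
      linarith
    set q : ℝ → ℝ := fun z => (deriv f (c - s * z) * (-s)) / f (c - s * z) with hqdef
    set φ : ℝ → ℝ := fun z => (2 / |ℓ|) * (s * |deriv f (c - s * z) * h z|) with hφdef
    have hφint : IntegrableOn φ (Set.Ioi γ) := by
      have h0 := hint2.abs.const_mul ((2 / |ℓ|) * s)
      refine h0.congr (Eventually.of_forall ?_)
      intro z
      simp only [hφdef]
      ring
    have hφnn : ∀ z : ℝ, 0 ≤ φ z := by
      intro z
      simp only [hφdef]
      positivity
    have hqb : ∀ z : ℝ, b ≤ z → |q z| ≤ φ z := by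
      intro z hz
      have hg2 : |ℓ| / 2 < |g z| := (hb z hz).1
      have hG : |g z| = |f (c - s * z)| * |h z| := by
        rw [hgdef]; exact abs_mul _ _
      have hBpos : 0 < |f (c - s * z)| := abs_pos.mpr (hFne z hz)
      simp only [hqdef, hφdef, abs_div, abs_mul, abs_neg, abs_of_pos hs]
      rw [div_le_iff₀ hBpos]
      calc |deriv f (c - s * z)| * s
          = (2 / |ℓ|) * (s * |deriv f (c - s * z)|) * (|ℓ| / 2) := by
            field_simp
        _ ≤ (2 / |ℓ|) * (s * |deriv f (c - s * z)|) * (|f (c - s * z)| * |h z|) := by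
            refine mul_le_mul_of_nonneg_left ?_ (by positivity)
            rw [← hG]; exact hg2.le
        _ = 2 / |ℓ| * (s * (|deriv f (c - s * z)| * |h z|)) * |f (c - s * z)| := by ring
    have hL : ∀ z : ℝ, b ≤ z → HasDerivAt (fun t => Real.log (f (c - s * t))) (q z) z :=
      fun z hz => (hFd z).log (hFne z hz)
    have hderivcont : Continuous (deriv f) := hf.continuous_deriv le_rfl
    have haff : Continuous (fun z : ℝ => c - s * z) :=
      continuous_const.sub (continuous_const.mul continuous_id)
    have hFcont : Continuous (fun z : ℝ => f (c - s * z)) := hf.continuous.comp haff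
    have hF'cont : Continuous (fun z : ℝ => deriv f (c - s * z) * (-s)) :=
      (hderivcont.comp haff).mul continuous_const
    have hqmeas : Measurable q := hF'cont.measurable.div hFcont.measurable
    -- the key bound on log |F z|
    have hLb : ∀ z : ℝ, b ≤ z →
        Real.log (f (c - s * z)) ≤ Real.log (f (c - s * b)) + ∫ t in Set.Ioi γ, φ t := by
      intro z hz
      have hqint : IntegrableOn q (Set.Ioc b z) := by
        refine Integrable.mono (hφint.mono_set ?_) hqmeas.aestronglyMeasurable ?_
        · intro t ht
          exact lt_of_le_of_lt hγb ht.1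
        · refine (ae_restrict_iff' measurableSet_Ioc).2 (Eventually.of_forall ?_)
          intro t ht
          rw [Real.norm_eq_abs, Real.norm_eq_abs, abs_of_nonneg (hφnn t)]
          exact hqb t ht.1.le
      have hFTCL : (∫ t in b..z, q t)
          = Real.log (f (c - s * z)) - Real.log (f (c - s * b)) := by
        refine intervalIntegral.integral_eq_sub_of_hasDerivAt
          (f := fun t => Real.log (f (c - s * t))) ?_ ?_
        · intro t ht
          rw [Set.uIcc_of_le hz] at ht
          exact hL t ht.1
        · rw [intervalIntegrable_iff_integrableOn_Ioc_of_le hz]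
          exact hqint
      have hb1 : |∫ t in b..z, q t| ≤ ∫ t in b..z, |q t| :=
        intervalIntegral.abs_integral_le_integral_abs hz
      have hb2 : (∫ t in b..z, |q t|) = ∫ t in Set.Ioc b z, |q t| := by
        rw [intervalIntegral.integral_of_le hz]
      have hb3 : (∫ t in Set.Ioc b z, |q t|) ≤ ∫ t in Set.Ioc b z, φ t := by
        refine setIntegral_mono_on hqint.abs (hφint.mono_set ?_) measurableSet_Ioc ?_
        · intro t ht
          exact lt_of_le_of_lt hγb ht.1
        · intro t ht
          exact hqb t ht.1.le
      have hb4 : (∫ t in Set.Ioc b z, φ t) ≤ ∫ t in Set.Ioi γ, φ t := by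
        refine setIntegral_mono_set hφint (Eventually.of_forall hφnn) ?_
        refine HasSubset.Subset.eventuallyLE ?_
        intro t ht
        exact lt_of_le_of_lt hγb ht.1
      have := abs_le.1 (le_trans hb1 (le_trans (le_of_eq hb2) (le_trans hb3 hb4))
        |>.trans_eq' (congrArg abs hFTCL)) |>.2
      linarith [this]
    set K := Real.exp (Real.log (f (c - s * b)) + ∫ t in Set.Ioi γ, φ t) with hK
    have hgb : ∀ z : ℝ, b ≤ z → |g z| ≤ K * |h z| := by
      intro z hz
      have hFabs : |f (c - s * z)| = Real.exp (Real.log (f (c - s * z))) :=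
        (Real.exp_log_eq_abs (hFne z hz)).symm
      have : |f (c - s * z)| ≤ K := by
        rw [hFabs, hK]
        exact Real.exp_le_exp.2 (hLb z hz)
      calc |g z| = |f (c - s * z)| * |h z| := by rw [hgdef]; exact abs_mul _ _
        _ ≤ K * |h z| := mul_le_mul_of_nonneg_right this (abs_nonneg _)
    have hto0 : Tendsto g atTop (nhds 0) := by
      refine squeeze_zero_norm' (a := fun z => K * |h z|) ?_ ?_
      · filter_upwards [eventually_ge_atTop b] with z hz
        simpa [Real.norm_eq_abs] using hgb z hz
      · have := hlim.norm.const_mul K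
        simpa using this
    exact hne (tendsto_nhds_unique htend hto0)
  have hIval : I = -(f (c - s * γ) * h γ) := by
    have hgγ : g γ = f (c - s * γ) * h γ := rfl
    rw [← hgγ]; linarith
  have split : (∫ z in Set.Ioi γ, f (c - s * z) * h₂ z)
      = ∫ z in Set.Ioi γ, (g' z + s * (deriv f (c - s * z) * h z)) := by
    refine integral_congr_ae (Eventually.of_forall ?_)
    intro z
    simp only [hg'def]
    ring
  rw [split, integral_add hg'int (hint2.const_mul s), integral_const_mul, ← hI, hIval]

/-- delta-function-free form of Theorem 3.1: integrating by parts
in `z₁`, the operator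
`𝒦h(y) = r·∫∫_{z₁ > γ(z₀)} f(y₀ₓ − r·z₀ − s·z₁)·∂₂h(z₀,z₁) dz₁ dz₀`
(with `y₀ₓ = min(y₀,x)` and `γ(z₀) = (y₀ₓ − y₁ − r·z₀)/s`) decomposes into a
boundary term supported on the line `z₁ = γ(z₀)` and an absolutely continuous
term involving `f′`. -/
theorem arma11_kernel_integration_by_parts
    (r s x y₀ y₁ : ℝ) (hr : 0 < r) (hs : 0 < s)
    (f : ℝ → ℝ) (hf : ContDiff ℝ 1 f)
    (h h₂ : ℝ → ℝ → ℝ)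
    (hh₂ : ∀ z₀ z₁ : ℝ, HasDerivAt (h z₀) (h₂ z₀ z₁) z₁)
    (hh₂_cont : Continuous (fun p : ℝ × ℝ => h₂ p.1 p.2))
    (hh_lim : ∀ z₀ : ℝ, Tendsto (h z₀) atTop (nhds 0))
    (hint1 : ∀ z₀ : ℝ, IntegrableOn
      (fun z₁ => f (min y₀ x - r * z₀ - s * z₁) * h₂ z₀ z₁)
      (Set.Ioi ((min y₀ x - y₁ - r * z₀) / s)))
    (hint2 : ∀ z₀ : ℝ, IntegrableOn
      (fun z₁ => deriv f (min y₀ x - r * z₀ - s * z₁) * h z₀ z₁)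
      (Set.Ioi ((min y₀ x - y₁ - r * z₀) / s)))
    (hint3 : Integrable (fun z₀ =>
      ∫ z₁ in Set.Ioi ((min y₀ x - y₁ - r * z₀) / s),
        f (min y₀ x - r * z₀ - s * z₁) * h₂ z₀ z₁))
    (hint4 : Integrable (fun z₀ =>
      ∫ z₁ in Set.Ioi ((min y₀ x - y₁ - r * z₀) / s),
        deriv f (min y₀ x - r * z₀ - s * z₁) * h z₀ z₁))
    (hint5 : Integrable (fun z₀ => h z₀ ((min y₀ x - y₁ - r * z₀) / s))) :
    r * ∫ z₀ : ℝ, ∫ z₁ in Set.Ioi ((min y₀ x - y₁ - r * z₀) / s),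
        f (min y₀ x - r * z₀ - s * z₁) * h₂ z₀ z₁
      = -r * f y₁ * (∫ z₀ : ℝ, h z₀ ((min y₀ x - y₁ - r * z₀) / s))
        + r * s * ∫ z₀ : ℝ, ∫ z₁ in Set.Ioi ((min y₀ x - y₁ - r * z₀) / s),
            deriv f (min y₀ x - r * z₀ - s * z₁) * h z₀ z₁ := by

  have key : ∀ z₀ : ℝ,
      (∫ z₁ in Set.Ioi ((min y₀ x - y₁ - r * z₀) / s),
        f (min y₀ x - r * z₀ - s * z₁) * h₂ z₀ z₁)
      = -(f y₁ * h z₀ ((min y₀ x - y₁ - r * z₀) / s))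
        + s * ∫ z₁ in Set.Ioi ((min y₀ x - y₁ - r * z₀) / s),
            deriv f (min y₀ x - r * z₀ - s * z₁) * h z₀ z₁ := by
    intro z₀
    have hc : min y₀ x - r * z₀ - s * ((min y₀ x - y₁ - r * z₀) / s) = y₁ := by
      field_simp
      ring
    have := ibp_aux s hs f hf (h z₀) (h₂ z₀) (hh₂ z₀) (hh_lim z₀)
      (min y₀ x - r * z₀) ((min y₀ x - y₁ - r * z₀) / s) (hint1 z₀) (hint2 z₀)
    rwa [hc] at this
  have houter : (∫ z₀ : ℝ, ∫ z₁ in Set.Ioi ((min y₀ x - y₁ - r * z₀) / s),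
        f (min y₀ x - r * z₀ - s * z₁) * h₂ z₀ z₁)
      = -(f y₁ * ∫ z₀ : ℝ, h z₀ ((min y₀ x - y₁ - r * z₀) / s))
        + s * ∫ z₀ : ℝ, ∫ z₁ in Set.Ioi ((min y₀ x - y₁ - r * z₀) / s),
            deriv f (min y₀ x - r * z₀ - s * z₁) * h z₀ z₁ := by
    rw [integral_congr_ae (Filter.Eventually.of_forall key)]
    have hA : Integrable (fun z₀ : ℝ => -(f y₁ * h z₀ ((min y₀ x - y₁ - r * z₀) / s))) :=
      (hint5.const_mul (f y₁)).neg
    have hB : Integrable (fun z₀ : ℝ => s * ∫ z₁ in Set.Ioi ((min y₀ x - y₁ - r * z₀) / s),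
        deriv f (min y₀ x - r * z₀ - s * z₁) * h z₀ z₁) := hint4.const_mul s
    rw [integral_add hA hB, integral_neg, integral_const_mul, integral_const_mul]
  rw [houter]
  ring
end

section
/- Let f : ℝ → [0, ∞) be a measurable function with ∫_ℝ f = 1 (a probability density), and fix real numbers r > 0, 0 ≤ s < 1, and x. For x < y₀ < z₀ define y₁* = (x − r·z₀ − s·(x − r·y₀))/(1 − s²) and z₁* = (x − r·y₀ − s·(x − r·z₀))/(1 − s²). Then ∫∫_{x < y₀ < z₀} f(y₁*)·f(z₁*) dy₀ dz₀ ≤ (1 − s²)/r². -/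
open MeasureTheory

/-- from the proof of Theorem 3.2: the `A₁ = {x < y₀ < z₀}` part
of the double-delta term `α₁₁`, with `y₁* = (x − r·z₀ − s·(x − r·y₀))/(1−s²)`
and `z₁* = (x − r·y₀ − s·(x − r·z₀))/(1−s²)`, is bounded by `(1−s²)/r²`. -/
theorem arma11_alpha11_A1_bound
    (f : ℝ → ℝ) (hf_meas : Measurable f) (hf_nonneg : ∀ t, 0 ≤ f t)
    (hf_int : ∫⁻ t : ℝ, ENNReal.ofReal (f t) = 1)
    (r s x : ℝ) (hr : 0 < r) (hs0 : 0 ≤ s) (hs1 : s < 1) :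
    ∫⁻ p in {p : ℝ × ℝ | x < p.1 ∧ p.1 < p.2},
        ENNReal.ofReal
          (f ((x - r * p.2 - s * (x - r * p.1)) / (1 - s ^ 2)) *
           f ((x - r * p.1 - s * (x - r * p.2)) / (1 - s ^ 2)))
      ≤ ENNReal.ofReal ((1 - s ^ 2) / r ^ 2) := by
  have hs2 : (0:ℝ) < 1 - s ^ 2 := by nlinarith
  have hs2' : (1:ℝ) - s ^ 2 ≠ 0 := ne_of_gt hs2
  have hsp : (1:ℝ) + s ≠ 0 := by nlinarith
  set a : ℝ := s * r / (1 - s ^ 2) with ha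
  set b : ℝ := -(r / (1 - s ^ 2)) with hb
  set M : (ℝ × ℝ) →ₗ[ℝ] ℝ × ℝ :=
    Matrix.toLin (Module.Basis.finTwoProd ℝ) (Module.Basis.finTwoProd ℝ) !![a, b; b, a] with hM
  have hdet : LinearMap.det M = -(r ^ 2) / (1 - s ^ 2) := by
    rw [hM, LinearMap.det_toLin, Matrix.det_fin_two_of, ha, hb]
    field_simp
    ring
  have hdet0 : LinearMap.det M ≠ 0 := by
    rw [hdet]
    exact div_ne_zero (by nlinarith) hs2'
  have habs : |(LinearMap.det M)⁻¹| = (1 - s ^ 2) / r ^ 2 := by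
    rw [hdet]
    rw [show (-(r^2)/(1-s^2))⁻¹ = -((1-s^2)/r^2) by field_simp, abs_neg,
      abs_of_nonneg (by positivity)]
  set c : ℝ × ℝ := (x / (1 + s), x / (1 + s)) with hc
  set F : ℝ × ℝ → ENNReal := fun q => ENNReal.ofReal (f q.1) * ENNReal.ofReal (f q.2)
    with hF
  have hFmeas : Measurable F :=
    ((ENNReal.measurable_ofReal.comp (hf_meas.comp measurable_fst)).mul
      (ENNReal.measurable_ofReal.comp (hf_meas.comp measurable_snd)))
  have hMmeas : Measurable M := (LinearMap.continuous_of_finiteDimensional M).measurable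
  have hpt : ∀ p : ℝ × ℝ,
      ENNReal.ofReal
          (f ((x - r * p.2 - s * (x - r * p.1)) / (1 - s ^ 2)) *
           f ((x - r * p.1 - s * (x - r * p.2)) / (1 - s ^ 2))) = F (M p + c) := by
    intro p
    have hMp : M p = (a * p.1 + b * p.2, b * p.1 + a * p.2) := by
      rw [hM]
      exact Matrix.toLin_finTwoProd_apply a b b a p
    have h1 : (x - r * p.2 - s * (x - r * p.1)) / (1 - s ^ 2)
        = a * p.1 + b * p.2 + x / (1 + s) := by
      rw [ha, hb]
      field_simp
      ring
    have h2 : (x - r * p.1 - s * (x - r * p.2)) / (1 - s ^ 2)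
        = b * p.1 + a * p.2 + x / (1 + s) := by
      rw [ha, hb]
      field_simp
      ring
    rw [h1, h2, ENNReal.ofReal_mul (hf_nonneg _)]
    simp [hF, hMp, hc, Prod.ext_iff]
  calc
    ∫⁻ p in {p : ℝ × ℝ | x < p.1 ∧ p.1 < p.2},
        ENNReal.ofReal
          (f ((x - r * p.2 - s * (x - r * p.1)) / (1 - s ^ 2)) *
           f ((x - r * p.1 - s * (x - r * p.2)) / (1 - s ^ 2)))
      ≤ ∫⁻ p : ℝ × ℝ,
        ENNReal.ofReal
          (f ((x - r * p.2 - s * (x - r * p.1)) / (1 - s ^ 2)) *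
           f ((x - r * p.1 - s * (x - r * p.2)) / (1 - s ^ 2))) :=
        setLIntegral_le_lintegral _ _
    _ = ∫⁻ p : ℝ × ℝ, F (M p + c) := lintegral_congr hpt
    _ = ∫⁻ q, F (q + c) ∂(Measure.map M volume) := by
        rw [lintegral_map (by fun_prop) hMmeas]
    _ = ∫⁻ q, F (q + c) ∂(ENNReal.ofReal |(LinearMap.det M)⁻¹| • (volume : Measure (ℝ × ℝ))) := by
        rw [Measure.map_linearMap_addHaar_eq_smul_addHaar _ hdet0]
    _ = ENNReal.ofReal ((1 - s ^ 2) / r ^ 2) * ∫⁻ q, F (q + c) := by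
        rw [lintegral_smul_measure, habs, smul_eq_mul]
    _ = ENNReal.ofReal ((1 - s ^ 2) / r ^ 2) * ∫⁻ q, F q := by
        rw [lintegral_add_right_eq_self F c]
    _ = ENNReal.ofReal ((1 - s ^ 2) / r ^ 2) := by
        have h1 : ∫⁻ q : ℝ × ℝ, ENNReal.ofReal (f q.1) * ENNReal.ofReal (f q.2) = 1 := by
          rw [Measure.volume_eq_prod, lintegral_prod_mul (f := fun t => ENNReal.ofReal (f t)) (g := fun t => ENNReal.ofReal (f t)) (by fun_prop) (by fun_prop),
            hf_int, mul_one]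
        simp only [hF]
        rw [h1, mul_one]
end

section
/- Let f : ℝ → [0, ∞) be a measurable function with ∫_ℝ f = 1 (a probability density), and fix real numbers 0 < r < 1, 0 ≤ s < 1, and x. Then ∫∫_{y₀ < z₀ < x} f( ((1 + s·r)·y₀ − (r + s)·z₀)/(1 − s²) ) · f( ((1 + s·r)·z₀ − (r + s)·y₀)/(1 − s²) ) dy₀ dz₀ ≤ (1 − s²)/(1 − r²). -/
open MeasureTheory

/-- from the proof of Theorem 3.2: the `A₃ = {y₀ < z₀ < x}` part
of the double-delta term `α₁₁`, with
`y₁* = ((1+s·r)·y₀ − (r+s)·z₀)/(1−s²)` and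
`z₁* = ((1+s·r)·z₀ − (r+s)·y₀)/(1−s²)`, is bounded by `(1−s²)/(1−r²)`. -/
theorem arma11_alpha11_A3_bound
    (f : ℝ → ℝ) (hf_meas : Measurable f) (hf_nonneg : ∀ t, 0 ≤ f t)
    (hf_int : ∫⁻ t : ℝ, ENNReal.ofReal (f t) = 1)
    (r s x : ℝ) (hr0 : 0 < r) (hr1 : r < 1) (hs0 : 0 ≤ s) (hs1 : s < 1) :
    ∫⁻ p in {p : ℝ × ℝ | p.1 < p.2 ∧ p.2 < x},
        ENNReal.ofReal
          (f (((1 + s * r) * p.1 - (r + s) * p.2) / (1 - s ^ 2)) *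
           f (((1 + s * r) * p.2 - (r + s) * p.1) / (1 - s ^ 2)))
      ≤ ENNReal.ofReal ((1 - s ^ 2) / (1 - r ^ 2)) := by
  have hs2 : (0:ℝ) < 1 - s ^ 2 := by nlinarith
  have hr2 : (0:ℝ) < 1 - r ^ 2 := by nlinarith
  set a : ℝ := (1 + s * r) / (1 - s ^ 2) with ha
  set b : ℝ := (r + s) / (1 - s ^ 2) with hb
  set L := Matrix.toLin (Module.Basis.finTwoProd ℝ) (Module.Basis.finTwoProd ℝ) !![a, -b; -b, a] with hL
  have hdet : LinearMap.det L = (1 - r ^ 2) / (1 - s ^ 2) := by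
    rw [hL, LinearMap.det_toLin, Matrix.det_fin_two_of, ha, hb]
    field_simp
    ring
  have hdetpos : 0 < LinearMap.det L := by rw [hdet]; positivity
  have hdetne : LinearMap.det L ≠ 0 := ne_of_gt hdetpos
  set g : ℝ × ℝ → ENNReal := fun q => ENNReal.ofReal (f q.1) * ENNReal.ofReal (f q.2) with hg
  have hgmeas : Measurable g :=
    ((ENNReal.measurable_ofReal.comp (hf_meas.comp measurable_fst)).mul
      (ENNReal.measurable_ofReal.comp (hf_meas.comp measurable_snd)))
  have hLapp : ∀ p : ℝ × ℝ,
      L p = (((1 + s * r) * p.1 - (r + s) * p.2) / (1 - s ^ 2),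
             ((1 + s * r) * p.2 - (r + s) * p.1) / (1 - s ^ 2)) := by
    intro p
    rw [hL]
    obtain ⟨p1, p2⟩ := p
    rw [Matrix.toLin_finTwoProd_apply]
    simp only [ha, hb]
    rw [Prod.mk.injEq]
    constructor <;> ring
  have hgint : ∫⁻ q : ℝ × ℝ, g q = 1 := by
    have hm : AEMeasurable (fun t : ℝ => ENNReal.ofReal (f t)) volume :=
      hf_meas.ennreal_ofReal.aemeasurable
    rw [hg, Measure.volume_eq_prod, lintegral_prod_mul hm hm, hf_int, one_mul]
  calc
    ∫⁻ p in {p : ℝ × ℝ | p.1 < p.2 ∧ p.2 < x},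
        ENNReal.ofReal
          (f (((1 + s * r) * p.1 - (r + s) * p.2) / (1 - s ^ 2)) *
           f (((1 + s * r) * p.2 - (r + s) * p.1) / (1 - s ^ 2)))
      ≤ ∫⁻ p : ℝ × ℝ,
        ENNReal.ofReal
          (f (((1 + s * r) * p.1 - (r + s) * p.2) / (1 - s ^ 2)) *
           f (((1 + s * r) * p.2 - (r + s) * p.1) / (1 - s ^ 2))) :=
      setLIntegral_le_lintegral _ _
    _ = ∫⁻ p : ℝ × ℝ, g (L p) := by
        refine lintegral_congr fun p => ?_
        rw [hLapp p, hg]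
        simp only
        rw [ENNReal.ofReal_mul (hf_nonneg _)]
    _ = ∫⁻ q, g q ∂(Measure.map L volume) := by
        rw [lintegral_map hgmeas (LinearMap.continuous_of_finiteDimensional L).measurable]
    _ = ENNReal.ofReal |(LinearMap.det L)⁻¹| * ∫⁻ q : ℝ × ℝ, g q := by
        rw [Measure.map_linearMap_addHaar_eq_smul_addHaar volume hdetne,
          lintegral_smul_measure, smul_eq_mul]
    _ = ENNReal.ofReal ((1 - s ^ 2) / (1 - r ^ 2)) := by
        rw [hgint, mul_one, hdet, abs_of_pos (by positivity), inv_div]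
end
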